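/- Let p ≥ 2 and let g : (0,∞) → [0,∞) be measurable with ∫₀^∞ g(t)^p dt/t < ∞. Then ∫₀^∞ ( (1/x) ∫₀^x g(t) dt )^p dx/x ≤ ∫₀^∞ g(t)^p dt/t − ∫₀^∞ (1/x) ∫₀^x | g(t) − (1/x) ∫₀^x g(s) ds |^p dt dx/x. -/

import Mathlib

open MeasureTheory Set
open scoped ENNReal

lemma rpow_superadd {q a b : ℝ} (hq : 1 ≤ q) (ha : 0 ≤ a) (hb : 0 ≤ b) :
    a ^ q + b ^ q ≤ (a + b) ^ q := by
  have h := NNReal.add_rpow_le_rpow_add a.toNNReal b.toNNReal hq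
  have h2 := NNReal.coe_le_coe.2 h
  push_cast [NNReal.coe_rpow] at h2
  simpa [Real.coe_toNNReal a ha, Real.coe_toNNReal b hb] using h2

lemma key_scalar {p a m : ℝ} (hp : 2 ≤ p) (ha : 0 ≤ a) (hm : 0 ≤ m) :
    |a - m| ^ p + m ^ p + p * m ^ (p - 1) * (a - m) ≤ a ^ p := by
  have hp1 : (1:ℝ) ≤ p := by linarith
  have hp1' : (1:ℝ) ≤ p - 1 := by linarith
  have hp0 : (0:ℝ) < p := by linarith
  rcases le_total m a with hma | ham
  · set f : ℝ → ℝ := fun t => (m + t) ^ p - t ^ p - p * m ^ (p - 1) * t with hf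
    have hd : ∀ t : ℝ, HasDerivAt f (p * (m + t) ^ (p - 1) - p * t ^ (p - 1) - p * m ^ (p - 1)) t := by
      intro t
      have h1 : HasDerivAt (fun t : ℝ => (m + t) ^ p) (p * (m + t) ^ (p - 1)) t := by
        have := (Real.hasDerivAt_rpow_const (x := m + t) (p := p) (Or.inr hp1)).comp t
          ((hasDerivAt_id t).const_add m)
        simpa [Function.comp_def] using this
      have h2 : HasDerivAt (fun t : ℝ => t ^ p) (p * t ^ (p - 1)) t :=
        Real.hasDerivAt_rpow_const (Or.inr hp1)
      have h3 : HasDerivAt (fun t : ℝ => p * m ^ (p - 1) * t) (p * m ^ (p - 1)) t := by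
        simpa using (hasDerivAt_id t).const_mul (p * m ^ (p - 1))
      exact (h1.sub h2).sub h3
    have hdiff : Differentiable ℝ f := fun t => (hd t).differentiableAt
    have hmono : MonotoneOn f (Ici 0) := by
      apply monotoneOn_of_deriv_nonneg (convex_Ici 0) hdiff.continuous.continuousOn
        hdiff.differentiableOn
      intro t ht
      rw [interior_Ici] at ht
      rw [(hd t).deriv]
      have := rpow_superadd hp1' hm (le_of_lt ht)
      nlinarith [this]
    have h0 : f 0 ≤ f (a - m) := hmono (mem_Ici.2 (le_refl 0)) (by simpa using sub_nonneg.2 hma)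
      (sub_nonneg.2 hma)
    have hf0 : f 0 = m ^ p := by
      simp [hf, Real.zero_rpow hp0.ne']
    have hfam : f (a - m) = a ^ p - (a - m) ^ p - p * m ^ (p - 1) * (a - m) := by
      simp [hf]
    rw [abs_of_nonneg (sub_nonneg.2 hma)]
    rw [hf0, hfam] at h0
    linarith
  · set e := m - a with he
    have he0 : 0 ≤ e := sub_nonneg.2 ham
    have hem : e ≤ m := by simp [he]; linarith
    set f : ℝ → ℝ := fun t => (m - t) ^ p + p * m ^ (p - 1) * t - t ^ p with hf
    have hd : ∀ t : ℝ, HasDerivAt f (-(p * (m - t) ^ (p - 1)) + p * m ^ (p - 1) - p * t ^ (p - 1)) t := by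
      intro t
      have h1 : HasDerivAt (fun t : ℝ => (m - t) ^ p) (-(p * (m - t) ^ (p - 1))) t := by
        have := (Real.hasDerivAt_rpow_const (x := m - t) (p := p) (Or.inr hp1)).comp t
          ((hasDerivAt_id t).const_sub m)
        simpa [Function.comp_def] using this
      have h2 : HasDerivAt (fun t : ℝ => t ^ p) (p * t ^ (p - 1)) t :=
        Real.hasDerivAt_rpow_const (Or.inr hp1)
      have h3 : HasDerivAt (fun t : ℝ => p * m ^ (p - 1) * t) (p * m ^ (p - 1)) t := by
        simpa using (hasDerivAt_id t).const_mul (p * m ^ (p - 1))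
      exact (h1.add h3).sub h2
    have hdiff : Differentiable ℝ f := fun t => (hd t).differentiableAt
    have hmono : MonotoneOn f (Icc 0 m) := by
      apply monotoneOn_of_deriv_nonneg (convex_Icc 0 m) hdiff.continuous.continuousOn
        hdiff.differentiableOn
      intro t ht
      rw [interior_Icc] at ht
      rw [(hd t).deriv]
      have h1 : (m - t) ^ (p-1) + t ^ (p-1) ≤ m ^ (p-1) := by
        have := rpow_superadd hp1' (a := m - t) (b := t) (by linarith [ht.2]) (le_of_lt ht.1)
        simpa using this
      nlinarith [h1]
    have h0 : f 0 ≤ f e := hmono (by constructor <;> [rfl; exact hm]) ⟨he0, hem⟩ he0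
    have hf0 : f 0 = m ^ p := by
      simp [hf, Real.zero_rpow hp0.ne']
    have hfe : f e = a ^ p + p * m ^ (p - 1) * e - e ^ p := by
      simp [hf, he]
    rw [hf0, hfe] at h0
    have habs : |a - m| = e := by rw [abs_of_nonpos (by linarith)]; simp [he]
    rw [habs]
    have : a - m = -e := by simp [he]
    rw [this]
    linarith

lemma inv_sq_eval {x : ℝ} (hx : 0 < x) : x ^ (-2:ℝ) = 1/(x*x) := by
  rw [Real.rpow_neg hx.le, show (2:ℝ) = ((2:ℕ):ℝ) by norm_num, Real.rpow_natCast,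
    one_div, sq]

lemma lint_inv_sq {t : ℝ} (ht : 0 < t) :
    ∫⁻ x in Ioi t, ENNReal.ofReal (1/(x*x)) = ENNReal.ofReal (1/t) := by
  have hint : IntegrableOn (fun x : ℝ => x ^ (-2:ℝ)) (Ioi t) :=
    integrableOn_Ioi_rpow_of_lt (by norm_num) ht
  have hnn : 0 ≤ᵐ[volume.restrict (Ioi t)] fun x : ℝ => x ^ (-2:ℝ) :=
    (ae_restrict_iff' measurableSet_Ioi).2 (Filter.Eventually.of_forall fun x hx =>
      Real.rpow_nonneg (le_of_lt (ht.trans hx)) _)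
  have heval : (∫ x in Ioi t, x ^ (-2:ℝ)) = 1/t := by
    rw [integral_Ioi_rpow_of_lt (by norm_num) ht]
    norm_num [Real.rpow_neg_one]
  have h1 := MeasureTheory.ofReal_integral_eq_lintegral_ofReal hint hnn
  rw [heval] at h1
  have h2 : ∫⁻ x in Ioi t, ENNReal.ofReal (1/(x*x))
      = ∫⁻ x in Ioi t, ENNReal.ofReal (x ^ (-2:ℝ)) := by
    refine setLIntegral_congr_fun measurableSet_Ioi (
      fun x hx => ?_)
    rw [inv_sq_eval (ht.trans hx)]
  rw [h2, ← h1]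

section
variable {p : ℝ} (hp : 2 ≤ p) {g : ℝ → ℝ}
  (hg_meas : Measurable g) (hg_nonneg : ∀ t ∈ Ioi (0:ℝ), 0 ≤ g t)
  (hg_int : IntegrableOn (fun t => g t ^ p / t) (Ioi (0:ℝ)))

include hp hg_meas hg_nonneg hg_int

lemma int_gp {x : ℝ} (hx : 0 < x) : IntegrableOn (fun t => g t ^ p) (Ioo 0 x) := by
  have hsub : Ioo (0:ℝ) x ⊆ Ioi 0 := Ioo_subset_Ioi_self
  have hI : IntegrableOn (fun t => g t ^ p / t) (Ioo 0 x) := hg_int.mono_set hsub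
  refine Integrable.mono' (hI.const_mul x) ?_ ?_
  · exact (hg_meas.pow_const p).aestronglyMeasurable
  · refine (ae_restrict_iff' measurableSet_Ioo).2 (Filter.Eventually.of_forall fun t ht => ?_)
    have ht0 : 0 < t := ht.1
    have hgt : 0 ≤ g t := hg_nonneg t ht0
    have h1 : 0 ≤ g t ^ p := Real.rpow_nonneg hgt p
    rw [Real.norm_eq_abs, abs_of_nonneg h1]
    have h2 : 0 ≤ g t ^ p / t := div_nonneg h1 ht0.le
    calc g t ^ p = t * (g t ^ p / t) := by field_simp
      _ ≤ x * (g t ^ p / t) := mul_le_mul_of_nonneg_right ht.2.le h2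

lemma int_g {x : ℝ} (hx : 0 < x) : IntegrableOn g (Ioo 0 x) := by
  have hb : IntegrableOn (fun t => 1 + g t ^ p) (Ioo 0 x) :=
    (integrableOn_const measure_Ioo_lt_top.ne).add (int_gp hp hg_meas hg_nonneg hg_int hx)
  refine Integrable.mono' hb hg_meas.aestronglyMeasurable ?_
  refine (ae_restrict_iff' measurableSet_Ioo).2 (Filter.Eventually.of_forall fun t ht => ?_)
  have hgt : 0 ≤ g t := hg_nonneg t ht.1
  rw [Real.norm_eq_abs, abs_of_nonneg hgt]
  rcases le_total (g t) 1 with h | h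
  · have : 0 ≤ g t ^ p := Real.rpow_nonneg hgt p
    linarith
  · have h2 : g t ^ (1:ℝ) ≤ g t ^ p := Real.rpow_le_rpow_of_exponent_le h (by linarith)
    rw [Real.rpow_one] at h2
    linarith

lemma int_absp {x : ℝ} (hx : 0 < x) {m : ℝ} (hm : 0 ≤ m) :
    IntegrableOn (fun t => |g t - m| ^ p) (Ioo 0 x) := by
  have hb : IntegrableOn (fun t => (2:ℝ) ^ p * g t ^ p + (2:ℝ) ^ p * m ^ p) (Ioo 0 x) :=
    ((int_gp hp hg_meas hg_nonneg hg_int hx).const_mul _).add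
      (integrableOn_const measure_Ioo_lt_top.ne)
  refine Integrable.mono' hb ?_ ?_
  · exact ((hg_meas.sub measurable_const).abs.pow_const p).aestronglyMeasurable
  · refine (ae_restrict_iff' measurableSet_Ioo).2 (Filter.Eventually.of_forall fun t ht => ?_)
    have hgt : 0 ≤ g t := hg_nonneg t ht.1
    have h0 : 0 ≤ |g t - m| ^ p := Real.rpow_nonneg (abs_nonneg _) p
    rw [Real.norm_eq_abs, abs_of_nonneg h0]
    have h1 : |g t - m| ≤ 2 * max (g t) m := by
      rcases le_total (g t) m with h | h
      · rw [abs_of_nonpos (by linarith)]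
        have := le_max_right (g t) m; linarith
      · rw [abs_of_nonneg (by linarith)]
        have := le_max_left (g t) m; linarith
    have h2 : |g t - m| ^ p ≤ (2 * max (g t) m) ^ p :=
      Real.rpow_le_rpow (abs_nonneg _) h1 (by linarith)
    have h3 : (2 * max (g t) m) ^ p = 2 ^ p * max (g t) m ^ p :=
      Real.mul_rpow (by norm_num) (le_max_of_le_left hgt)
    have h4 : max (g t) m ^ p ≤ g t ^ p + m ^ p := by
      rcases max_cases (g t) m with ⟨he, _⟩ | ⟨he, _⟩ <;> rw [he]
      · nlinarith [Real.rpow_nonneg hm p]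
      · nlinarith [Real.rpow_nonneg hgt p]
    calc |g t - m| ^ p ≤ 2 ^ p * max (g t) m ^ p := by rw [← h3]; exact h2
      _ ≤ 2 ^ p * g t ^ p + 2 ^ p * m ^ p := by
          have : (0:ℝ) ≤ 2 ^ p := Real.rpow_nonneg (by norm_num) p
          nlinarith [h4]

lemma perx {x : ℝ} (hx : 0 < x) {m : ℝ} (hm : m = (1/x) * ∫ t in Ioo (0:ℝ) x, g t) :
    x * m ^ p + (∫ t in Ioo (0:ℝ) x, |g t - m| ^ p) ≤ ∫ t in Ioo (0:ℝ) x, g t ^ p := by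
  have hm0 : 0 ≤ m := by
    rw [hm]
    exact mul_nonneg (by positivity)
      (setIntegral_nonneg measurableSet_Ioo fun t ht => hg_nonneg t ht.1)
  have hIg : (∫ t in Ioo (0:ℝ) x, g t) = x * m := by rw [hm]; field_simp
  have I1 := int_absp hp hg_meas hg_nonneg hg_int hx hm0
  have Ic : IntegrableOn (fun _ : ℝ => m ^ p) (Ioo 0 x) :=
    integrableOn_const measure_Ioo_lt_top.ne
  have Ig := int_g hp hg_meas hg_nonneg hg_int hx
  have Icm : IntegrableOn (fun _ : ℝ => m) (Ioo 0 x) :=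
    integrableOn_const measure_Ioo_lt_top.ne
  have I3 : IntegrableOn (fun t => p * m ^ (p-1) * (g t - m)) (Ioo 0 x) :=
    (Ig.sub Icm).const_mul _
  have hmono : (∫ t in Ioo (0:ℝ) x, (|g t - m| ^ p + m ^ p + p * m ^ (p-1) * (g t - m)))
      ≤ ∫ t in Ioo (0:ℝ) x, g t ^ p := by
    refine setIntegral_mono_on ((I1.add Ic).add I3)
      (int_gp hp hg_meas hg_nonneg hg_int hx) measurableSet_Ioo fun t ht => ?_
    exact key_scalar hp (hg_nonneg t ht.1) hm0
  have hvol : (volume (Ioo (0:ℝ) x)).toReal = x := by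
    rw [Real.volume_Ioo]; simp [ENNReal.toReal_ofReal hx.le]
  have hsplit : (∫ t in Ioo (0:ℝ) x, (|g t - m| ^ p + m ^ p + p * m ^ (p-1) * (g t - m)))
      = (∫ t in Ioo (0:ℝ) x, |g t - m| ^ p) + x * m ^ p
        + p * m ^ (p-1) * ((∫ t in Ioo (0:ℝ) x, g t) - x * m) := by
    have I12 : IntegrableOn (fun t => |g t - m| ^ p + m ^ p) (Ioo 0 x) := I1.add Ic
    rw [integral_add I12 I3, integral_add I1 Ic]
    rw [setIntegral_const, measureReal_def, hvol, integral_const_mul _ _, integral_sub Ig Icm,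
      setIntegral_const, measureReal_def, hvol, smul_eq_mul, smul_eq_mul]
  rw [hsplit, hIg] at hmono
  simp at hmono
  linarith

lemma tonelli_W :
    ∫⁻ x in Ioi (0:ℝ), ENNReal.ofReal ((1/(x*x)) * ∫ t in Ioo (0:ℝ) x, g t ^ p)
      = ∫⁻ t in Ioi (0:ℝ), ENNReal.ofReal (g t ^ p / t) := by
  set φ : ℝ → ℝ≥0∞ := fun t => ENNReal.ofReal (g t ^ p) with hφ
  have hφmeas : Measurable φ := ENNReal.measurable_ofReal.comp (hg_meas.pow_const p)
  set K : ℝ → ℝ → ℝ≥0∞ :=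
    fun x t => ENNReal.ofReal (1/(x*x)) * (Ioo (0:ℝ) x).indicator φ t with hK
  have stepA : ∫⁻ x in Ioi (0:ℝ), ENNReal.ofReal ((1/(x*x)) * ∫ t in Ioo (0:ℝ) x, g t ^ p)
      = ∫⁻ x in Ioi (0:ℝ), ∫⁻ t in Ioi (0:ℝ), K x t := by
    refine setLIntegral_congr_fun measurableSet_Ioi (
      fun x hx => ?_)
    have hx0 : (0:ℝ) < x := hx
    have hnn : 0 ≤ᵐ[volume.restrict (Ioo (0:ℝ) x)] fun t => g t ^ p :=
      (ae_restrict_iff' measurableSet_Ioo).2 (Filter.Eventually.of_forall fun t ht =>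
        Real.rpow_nonneg (hg_nonneg t ht.1) _)
    calc ENNReal.ofReal ((1/(x*x)) * ∫ t in Ioo (0:ℝ) x, g t ^ p)
        = ENNReal.ofReal (1/(x*x)) * ENNReal.ofReal (∫ t in Ioo (0:ℝ) x, g t ^ p) :=
          ENNReal.ofReal_mul (by positivity)
      _ = ENNReal.ofReal (1/(x*x)) * ∫⁻ t in Ioo (0:ℝ) x, φ t := by
          rw [MeasureTheory.ofReal_integral_eq_lintegral_ofReal
            (int_gp hp hg_meas hg_nonneg hg_int hx0) hnn]
      _ = ENNReal.ofReal (1/(x*x)) * ∫⁻ t in Ioi (0:ℝ), (Ioo (0:ℝ) x).indicator φ t := by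
          rw [lintegral_indicator measurableSet_Ioo, Measure.restrict_restrict measurableSet_Ioo,
            inter_eq_left.2 Ioo_subset_Ioi_self]
      _ = ∫⁻ t in Ioi (0:ℝ), K x t :=
          (lintegral_const_mul' _ _ ENNReal.ofReal_ne_top).symm
  have hKmeas : Measurable (Function.uncurry K) := by
    have h1 : Measurable fun q : ℝ × ℝ => ENNReal.ofReal (1/(q.1*q.1)) :=
      ENNReal.measurable_ofReal.comp (measurable_const.div (measurable_fst.mul measurable_fst))
    have h2 : Measurable fun q : ℝ × ℝ => (Ioo (0:ℝ) q.1).indicator φ q.2 := by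
      have he : (fun q : ℝ × ℝ => (Ioo (0:ℝ) q.1).indicator φ q.2)
          = {q : ℝ × ℝ | 0 < q.2 ∧ q.2 < q.1}.indicator (fun q => φ q.2) := by
        funext q
        by_cases h : 0 < q.2 ∧ q.2 < q.1 <;>
          simp [Set.indicator_apply, Set.mem_Ioo, Set.mem_setOf_eq, h]
      rw [he]
      exact (hφmeas.comp measurable_snd).indicator
        ((measurableSet_lt measurable_const measurable_snd).inter
          (measurableSet_lt measurable_snd measurable_fst))
    exact h1.mul h2
  have stepB : ∫⁻ x in Ioi (0:ℝ), ∫⁻ t in Ioi (0:ℝ), K x t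
      = ∫⁻ t in Ioi (0:ℝ), ∫⁻ x in Ioi (0:ℝ), K x t :=
    lintegral_lintegral_swap hKmeas.aemeasurable
  have stepC : ∫⁻ t in Ioi (0:ℝ), ∫⁻ x in Ioi (0:ℝ), K x t
      = ∫⁻ t in Ioi (0:ℝ), ENNReal.ofReal (g t ^ p / t) := by
    refine setLIntegral_congr_fun measurableSet_Ioi (
      fun t ht => ?_)
    have ht0 : (0:ℝ) < t := ht
    have hrw : ∀ x, K x t = (Ioi t).indicator (fun x => ENNReal.ofReal (1/(x*x)) * φ t) x := by
      intro x
      simp only [hK]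
      by_cases h : t < x
      · rw [Set.indicator_of_mem (show t ∈ Ioo (0:ℝ) x from ⟨ht0, h⟩),
          Set.indicator_of_mem (show x ∈ Ioi t from h)]
      · rw [Set.indicator_of_notMem (show t ∉ Ioo (0:ℝ) x from fun hc => h hc.2), mul_zero,
          Set.indicator_of_notMem (show x ∉ Ioi t from h)]
    calc ∫⁻ x in Ioi (0:ℝ), K x t
        = ∫⁻ x in Ioi (0:ℝ), (Ioi t).indicator (fun x => ENNReal.ofReal (1/(x*x)) * φ t) x :=
          lintegral_congr fun x => hrw x
      _ = ∫⁻ x in Ioi t, ENNReal.ofReal (1/(x*x)) * φ t := by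
          rw [lintegral_indicator measurableSet_Ioi, Measure.restrict_restrict measurableSet_Ioi,
            inter_eq_left.2 (Ioi_subset_Ioi ht0.le)]
      _ = (∫⁻ x in Ioi t, ENNReal.ofReal (1/(x*x))) * φ t :=
          lintegral_mul_const' _ _ ENNReal.ofReal_ne_top
      _ = ENNReal.ofReal (1/t) * φ t := by rw [lint_inv_sq ht0]
      _ = ENNReal.ofReal (g t ^ p / t) := by
          rw [hφ, ← ENNReal.ofReal_mul (by positivity)]
          congr 1
          field_simp
  rw [stepA, stepB, stepC]

end

theorem hardy_lemma_scalar (p : ℝ) (hp : 2 ≤ p) (g : ℝ → ℝ)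
    (hg_meas : Measurable g) (hg_nonneg : ∀ t ∈ Ioi (0:ℝ), 0 ≤ g t)
    (hg_int : IntegrableOn (fun t => g t ^ p / t) (Ioi (0:ℝ))) :
    ∫ x in Ioi (0:ℝ), ((1/x) * ∫ t in Ioo (0:ℝ) x, g t) ^ p / x
      ≤ (∫ t in Ioi (0:ℝ), g t ^ p / t)
        - ∫ x in Ioi (0:ℝ),
            ((1/x) * ∫ t in Ioo (0:ℝ) x,
              |g t - (1/x) * ∫ s in Ioo (0:ℝ) x, g s| ^ p) / x := by
  -- monotonicity ⇒ measurability of inner integrals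
  have hF_mono : Monotone (fun x : ℝ => ∫ t in Ioo (0:ℝ) x, g t) := by
    intro a b hab
    rcases le_or_gt b 0 with hb | hb
    · have h1 : Ioo (0:ℝ) a = ∅ := Ioo_eq_empty (not_lt.2 (hab.trans hb))
      have h2 : Ioo (0:ℝ) b = ∅ := Ioo_eq_empty (not_lt.2 hb)
      simp [h1, h2]
    · exact setIntegral_mono_set (int_g hp hg_meas hg_nonneg hg_int hb)
        ((ae_restrict_iff' measurableSet_Ioo).2 (Filter.Eventually.of_forall
          fun t ht => hg_nonneg t ht.1))
        (HasSubset.Subset.eventuallyLE (Ioo_subset_Ioo_right hab))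
  have hG_mono : Monotone (fun x : ℝ => ∫ t in Ioo (0:ℝ) x, g t ^ p) := by
    intro a b hab
    rcases le_or_gt b 0 with hb | hb
    · have h1 : Ioo (0:ℝ) a = ∅ := Ioo_eq_empty (not_lt.2 (hab.trans hb))
      have h2 : Ioo (0:ℝ) b = ∅ := Ioo_eq_empty (not_lt.2 hb)
      simp [h1, h2]
    · exact setIntegral_mono_set (int_gp hp hg_meas hg_nonneg hg_int hb)
        ((ae_restrict_iff' measurableSet_Ioo).2 (Filter.Eventually.of_forall
          fun t ht => Real.rpow_nonneg (hg_nonneg t ht.1) _))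
        (HasSubset.Subset.eventuallyLE (Ioo_subset_Ioo_right hab))
  have hF_meas := hF_mono.measurable
  have hG_meas := hG_mono.measurable
  have hA_meas : Measurable (fun x : ℝ => (1/x) * ∫ t in Ioo (0:ℝ) x, g t) :=
    (measurable_const.div measurable_id).mul hF_meas
  -- measurability of x ↦ ∫ |g - A x|^p on (0,x)
  have hH_meas : Measurable (fun x : ℝ =>
      ∫ t in Ioo (0:ℝ) x, |g t - (1/x) * ∫ s in Ioo (0:ℝ) x, g s| ^ p) := by
    have hfmeas : Measurable (fun q : ℝ × ℝ =>
        ({q : ℝ × ℝ | 0 < q.2 ∧ q.2 < q.1}.indicator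
          (fun q => |g q.2 - (1/q.1) * ∫ s in Ioo (0:ℝ) q.1, g s| ^ p)) q) := by
      apply Measurable.indicator
      · exact ((hg_meas.comp measurable_snd).sub
          (hA_meas.comp measurable_fst)).abs.pow_const p
      · exact (measurableSet_lt measurable_const measurable_snd).inter
          (measurableSet_lt measurable_snd measurable_fst)
    have hsm := hfmeas.stronglyMeasurable.integral_prod_right' (ν := volume)
    have heq : (fun x : ℝ => ∫ t in Ioo (0:ℝ) x, |g t - (1/x) * ∫ s in Ioo (0:ℝ) x, g s| ^ p)
        = fun x : ℝ => ∫ t, ({q : ℝ × ℝ | 0 < q.2 ∧ q.2 < q.1}.indicator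
            (fun q => |g q.2 - (1/q.1) * ∫ s in Ioo (0:ℝ) q.1, g s| ^ p)) (x, t) := by
      funext x
      rw [← integral_indicator measurableSet_Ioo]
      refine integral_congr_ae (Filter.Eventually.of_forall fun t => ?_)
      by_cases h : 0 < t ∧ t < x <;>
        simp [Set.indicator_apply, Set.mem_Ioo, Set.mem_setOf_eq, h]
    rw [heq]
    exact hsm.measurable
  -- W facts
  have hW_meas : Measurable (fun x : ℝ => (1/(x*x)) * ∫ t in Ioo (0:ℝ) x, g t ^ p) :=
    (measurable_const.div (measurable_id.mul measurable_id)).mul hG_meas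
  have hW_nn : 0 ≤ᵐ[volume.restrict (Ioi (0:ℝ))]
      fun x : ℝ => (1/(x*x)) * ∫ t in Ioo (0:ℝ) x, g t ^ p :=
    (ae_restrict_iff' measurableSet_Ioi).2 (Filter.Eventually.of_forall fun x hx => by
      have hx0 : (0:ℝ) < x := hx
      exact mul_nonneg (by positivity)
        (setIntegral_nonneg measurableSet_Ioo fun t ht => Real.rpow_nonneg (hg_nonneg t ht.1) _))
  have hgpt_nn : 0 ≤ᵐ[volume.restrict (Ioi (0:ℝ))] fun t : ℝ => g t ^ p / t :=
    (ae_restrict_iff' measurableSet_Ioi).2 (Filter.Eventually.of_forall fun t ht =>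
      div_nonneg (Real.rpow_nonneg (hg_nonneg t ht) _) (le_of_lt ht))
  have hfin : (∫⁻ t in Ioi (0:ℝ), ENNReal.ofReal (g t ^ p / t)) < ⊤ := by
    rw [← hasFiniteIntegral_iff_ofReal hgpt_nn]
    exact hg_int.hasFiniteIntegral
  have hIW : IntegrableOn (fun x : ℝ => (1/(x*x)) * ∫ t in Ioo (0:ℝ) x, g t ^ p) (Ioi 0) := by
    refine ⟨hW_meas.aestronglyMeasurable, ?_⟩
    rw [hasFiniteIntegral_iff_ofReal hW_nn, tonelli_W hp hg_meas hg_nonneg hg_int]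
    exact hfin
  have hWint_eq : (∫ x in Ioi (0:ℝ), (1/(x*x)) * ∫ t in Ioo (0:ℝ) x, g t ^ p)
      = ∫ t in Ioi (0:ℝ), g t ^ p / t := by
    rw [integral_eq_lintegral_of_nonneg_ae hW_nn hW_meas.aestronglyMeasurable.restrict,
      integral_eq_lintegral_of_nonneg_ae hgpt_nn hg_int.aestronglyMeasurable,
      tonelli_W hp hg_meas hg_nonneg hg_int]
  -- pointwise key inequality
  have hkey : ∀ x ∈ Ioi (0:ℝ),
      ((1/x) * ∫ t in Ioo (0:ℝ) x, g t) ^ p / x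
        + ((1/x) * ∫ t in Ioo (0:ℝ) x, |g t - (1/x) * ∫ s in Ioo (0:ℝ) x, g s| ^ p) / x
      ≤ (1/(x*x)) * ∫ t in Ioo (0:ℝ) x, g t ^ p := by
    intro x hx
    have hx0 : (0:ℝ) < x := hx
    have hper := perx hp hg_meas hg_nonneg hg_int hx0
      (m := (1/x) * ∫ t in Ioo (0:ℝ) x, g t) rfl
    set m := (1/x) * ∫ t in Ioo (0:ℝ) x, g t with hmdef
    set J := ∫ t in Ioo (0:ℝ) x, |g t - m| ^ p with hJ
    set K := ∫ t in Ioo (0:ℝ) x, g t ^ p with hKK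
    have e1 : m ^ p / x + ((1/x) * J) / x = (x * m ^ p + J) / (x*x) := by
      field_simp
    have e2 : (1/(x*x)) * K = K / (x*x) := one_div_mul_eq_div _ _
    rw [e1, e2]
    exact div_le_div_of_nonneg_right hper (by positivity)
  -- nonnegativity of both integrands
  have hΦ1_nn : ∀ x ∈ Ioi (0:ℝ), 0 ≤ ((1/x) * ∫ t in Ioo (0:ℝ) x, g t) ^ p / x := by
    intro x hx
    have hx0 : (0:ℝ) < x := hx
    exact div_nonneg (Real.rpow_nonneg (mul_nonneg (by positivity)
      (setIntegral_nonneg measurableSet_Ioo fun t ht => hg_nonneg t ht.1)) _) hx0.le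
  have hΦ2_nn : ∀ x ∈ Ioi (0:ℝ), 0 ≤
      ((1/x) * ∫ t in Ioo (0:ℝ) x, |g t - (1/x) * ∫ s in Ioo (0:ℝ) x, g s| ^ p) / x := by
    intro x hx
    have hx0 : (0:ℝ) < x := hx
    exact div_nonneg (mul_nonneg (by positivity)
      (setIntegral_nonneg measurableSet_Ioo fun t ht =>
        Real.rpow_nonneg (abs_nonneg _) _)) hx0.le
  -- integrability of both parts
  have hΦ1_meas : Measurable (fun x : ℝ => ((1/x) * ∫ t in Ioo (0:ℝ) x, g t) ^ p / x) :=
    (hA_meas.pow_const p).div measurable_id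
  have hΦ2_meas : Measurable (fun x : ℝ =>
      ((1/x) * ∫ t in Ioo (0:ℝ) x, |g t - (1/x) * ∫ s in Ioo (0:ℝ) x, g s| ^ p) / x) :=
    ((measurable_const.div measurable_id).mul hH_meas).div measurable_id
  have hIΦ1 : IntegrableOn (fun x : ℝ => ((1/x) * ∫ t in Ioo (0:ℝ) x, g t) ^ p / x) (Ioi 0) := by
    refine Integrable.mono' hIW hΦ1_meas.aestronglyMeasurable ?_
    refine (ae_restrict_iff' measurableSet_Ioi).2 (Filter.Eventually.of_forall fun x hx => ?_)
    rw [Real.norm_eq_abs, abs_of_nonneg (hΦ1_nn x hx)]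
    linarith [hkey x hx, hΦ2_nn x hx]
  have hIΦ2 : IntegrableOn (fun x : ℝ =>
      ((1/x) * ∫ t in Ioo (0:ℝ) x, |g t - (1/x) * ∫ s in Ioo (0:ℝ) x, g s| ^ p) / x) (Ioi 0) := by
    refine Integrable.mono' hIW hΦ2_meas.aestronglyMeasurable ?_
    refine (ae_restrict_iff' measurableSet_Ioi).2 (Filter.Eventually.of_forall fun x hx => ?_)
    rw [Real.norm_eq_abs, abs_of_nonneg (hΦ2_nn x hx)]
    linarith [hkey x hx, hΦ1_nn x hx]
  have I12 : IntegrableOn (fun x : ℝ => ((1/x) * ∫ t in Ioo (0:ℝ) x, g t) ^ p / x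
      + ((1/x) * ∫ t in Ioo (0:ℝ) x, |g t - (1/x) * ∫ s in Ioo (0:ℝ) x, g s| ^ p) / x)
      (Ioi 0) := hIΦ1.add hIΦ2
  have hmono : (∫ x in Ioi (0:ℝ), (((1/x) * ∫ t in Ioo (0:ℝ) x, g t) ^ p / x
      + ((1/x) * ∫ t in Ioo (0:ℝ) x, |g t - (1/x) * ∫ s in Ioo (0:ℝ) x, g s| ^ p) / x))
      ≤ ∫ x in Ioi (0:ℝ), (1/(x*x)) * ∫ t in Ioo (0:ℝ) x, g t ^ p :=
    setIntegral_mono_on I12 hIW measurableSet_Ioi hkey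
  rw [integral_add hIΦ1 hIΦ2] at hmono
  linarith [hWint_eq, hmono]
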